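/- Let n ≥ 2 and k, l be integers with gcd(n, k, l) = 1 such that none of (B.0), (B.1), (B.2) hold. If for some j ∈ {0,1,2} (condition indices read mod 3) either both (E.j) and (F1.(j+2)) hold, or both (E.j) and (F2.(2−j)) hold, then n = 27. -/

import Mathlib

/-- `c ≡ ±n/p (mod n)`: `p` divides `n`, and `c ≡ n/p` or `c ≡ -n/p (mod n)`. -/
def pmMod (n p c : ℤ) : Prop := p ∣ n ∧ (n ∣ (c - n / p) ∨ n ∣ (c + n / p))

/-- Conditions (B.0), (B.1), (B.2). -/
def condB (n k l : ℤ) : ZMod 3 → Prop := fun j =>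
  if j = 0 then n ∣ (2 * k - l) else if j = 1 then n ∣ (2 * l - k) else n ∣ (k + l)

/-- Conditions (C.0), (C.1), (C.2). -/
def condC (n k l : ℤ) : ZMod 3 → Prop := fun j =>
  if j = 0 then pmMod n 3 l else if j = 1 then pmMod n 3 k else pmMod n 3 (k - l)

/-- Conditions (D.0), (D.1), (D.2). -/
def condD (n k l : ℤ) : ZMod 3 → Prop := fun j =>
  if j = 0 then 2 ∣ n ∧ n ∣ (2 * k - l - n / 2)
  else if j = 1 then 2 ∣ n ∧ n ∣ (2 * l - k - n / 2)
  else 2 ∣ n ∧ n ∣ (k + l - n / 2)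

/-- Conditions (E.0), (E.1), (E.2). -/
def condE (n k l : ℤ) : ZMod 3 → Prop := fun j =>
  if j = 0 then pmMod n 3 (2 * k - l) else if j = 1 then pmMod n 3 (2 * l - k)
  else pmMod n 3 (k + l)

/-- Conditions (F1.0), (F1.1), (F1.2). -/
def condF1 (n k l : ℤ) : ZMod 3 → Prop := fun j =>
  if j = 0 then n ∣ (5 * k - l) else if j = 1 then n ∣ (5 * l - 4 * k) else n ∣ (k + 4 * l)

/-- Conditions (F2.0), (F2.1), (F2.2). -/
def condF2 (n k l : ℤ) : ZMod 3 → Prop := fun j =>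
  if j = 0 then n ∣ (4 * l - 5 * k) else if j = 1 then n ∣ (4 * k + l) else n ∣ (5 * l - k)

lemma comb {N x a b : ℤ} (p q : ℤ) (h1 : N ∣ a) (h2 : N ∣ b) (hx : x = p*a + q*b) : N ∣ x :=
  hx ▸ dvd_add (h1.mul_left p) (h2.mul_left q)

lemma key (n : ℕ) (hn : 2 ≤ n) (a b e f m : ℤ)
    (hg : Nat.Coprime n (Int.gcd a b))
    (hm : (n:ℤ) = 3*m)
    (he : e = 1 ∨ e = 4 ∨ e = 5) (_hf : f = 1 ∨ f = 4 ∨ f = 5)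
    (hx : (n:ℤ) ∣ 9*a - e*m ∨ (n:ℤ) ∣ 9*a + e*m)
    (hy : (n:ℤ) ∣ 9*b - f*m ∨ (n:ℤ) ∣ 9*b + f*m) : n = 27 := by
  have ha : (n:ℤ) ∣ 27*a := by
    rcases hx with ⟨c, hc⟩ | ⟨c, hc⟩
    · exact ⟨3*c + e, by linear_combination 3*hc - e*hm⟩
    · exact ⟨3*c - e, by linear_combination 3*hc + e*hm⟩
  have hb : (n:ℤ) ∣ 27*b := by
    rcases hy with ⟨c, hc⟩ | ⟨c, hc⟩
    · exact ⟨3*c + f, by linear_combination 3*hc - f*hm⟩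
    · exact ⟨3*c - f, by linear_combination 3*hc + f*hm⟩
  have hdvd : (n:ℤ) ∣ (Int.gcd (27*a) (27*b) : ℤ) := Int.dvd_coe_gcd ha hb
  rw [Int.gcd_mul_left] at hdvd
  have hnat : n ∣ 27 * Int.gcd a b := by
    have : ((n:ℤ)) ∣ ((27 * Int.gcd a b : ℕ) : ℤ) := by
      push_cast
      simpa using hdvd
    exact_mod_cast this
  have h27 : n ∣ 27 := hg.dvd_of_dvd_mul_right hnat
  have h1 : n = 1 ∨ n = 3 ∨ n = 9 ∨ n = 27 := by
    have hle := Nat.le_of_dvd (by norm_num) h27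
    interval_cases n <;> omega
  rcases h1 with rfl | rfl | rfl | rfl
  · omega
  · exfalso
    have hm' : (3:ℤ) = 3*m := by exact_mod_cast hm
    rcases he with rfl | rfl | rfl <;> rcases hx with h | h <;>
      · push_cast at h
        omega
  · exfalso
    have hm' : (9:ℤ) = 3*m := by exact_mod_cast hm
    rcases he with rfl | rfl | rfl <;> rcases hx with h | h <;>
      · push_cast at h
        omega
  · rfl

theorem stmt6 (n : ℕ) (hn : 2 ≤ n) (k l : ℤ)
    (hgcd : Int.gcd (n : ℤ) ((Int.gcd k l : ℤ)) = 1)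
    (hB : ∀ j : ZMod 3, ¬ condB n k l j)
    (h : ∃ j : ZMod 3, (condE n k l j ∧ condF1 n k l (j + 2)) ∨
        (condE n k l j ∧ condF2 n k l (2 - j))) :
    n = 27 := by
  clear hB
  have hg : Nat.Coprime n (Int.gcd k l) := by
    simpa [Int.gcd, Nat.Coprime] using hgcd
  have hg' : Nat.Coprime n (Int.gcd l k) := by rwa [Int.gcd_comm] at hg
  obtain ⟨j, h⟩ := h
  have hj : ∀ x : ZMod 3, x = 0 ∨ x = 1 ∨ x = 2 := by decide
  rcases hj j with rfl | rfl | rfl <;>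
    simp (config := { decide := true }) only [condE, condF1, condF2, pmMod,
      if_true, if_false] at h
  · -- j = 0 : E.0 with F1.2 or F2.2
    rcases h with ⟨⟨h3, hd⟩, hF⟩ | ⟨⟨h3, hd⟩, hF⟩ <;>
      obtain ⟨m, hm⟩ := h3 <;>
      rw [show ((n:ℤ))/3 = m from by rw [hm]; exact Int.mul_ediv_cancel_left m (by norm_num)] at hd
    · rcases hd with hc | hc
      · exact key n hn l k 1 4 m hg' hm (by norm_num) (by norm_num)
          (Or.inr (comb 2 (-1) hF hc (by ring))) (Or.inl (comb 1 4 hF hc (by ring)))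
      · exact key n hn l k 1 4 m hg' hm (by norm_num) (by norm_num)
          (Or.inl (comb 2 (-1) hF hc (by ring))) (Or.inr (comb 1 4 hF hc (by ring)))
    · rcases hd with hc | hc
      · exact key n hn l k 1 5 m hg' hm (by norm_num) (by norm_num)
          (Or.inl (comb 2 1 hF hc (by ring))) (Or.inl (comb 1 5 hF hc (by ring)))
      · exact key n hn l k 1 5 m hg' hm (by norm_num) (by norm_num)
          (Or.inr (comb 2 1 hF hc (by ring))) (Or.inr (comb 1 5 hF hc (by ring)))
  · -- j = 1 : E.1 with F1.0 or F2.1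
    rcases h with ⟨⟨h3, hd⟩, hF⟩ | ⟨⟨h3, hd⟩, hF⟩ <;>
      obtain ⟨m, hm⟩ := h3 <;>
      rw [show ((n:ℤ))/3 = m from by rw [hm]; exact Int.mul_ediv_cancel_left m (by norm_num)] at hd
    · rcases hd with hc | hc
      · exact key n hn k l 1 5 m hg hm (by norm_num) (by norm_num)
          (Or.inl (comb 2 1 hF hc (by ring))) (Or.inl (comb 1 5 hF hc (by ring)))
      · exact key n hn k l 1 5 m hg hm (by norm_num) (by norm_num)
          (Or.inr (comb 2 1 hF hc (by ring))) (Or.inr (comb 1 5 hF hc (by ring)))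
    · rcases hd with hc | hc
      · exact key n hn k l 1 4 m hg hm (by norm_num) (by norm_num)
          (Or.inr (comb 2 (-1) hF hc (by ring))) (Or.inl (comb 1 4 hF hc (by ring)))
      · exact key n hn k l 1 4 m hg hm (by norm_num) (by norm_num)
          (Or.inl (comb 2 (-1) hF hc (by ring))) (Or.inr (comb 1 4 hF hc (by ring)))
  · -- j = 2 : E.2 with F1.1 or F2.0
    rcases h with ⟨⟨h3, hd⟩, hF⟩ | ⟨⟨h3, hd⟩, hF⟩ <;>
      obtain ⟨m, hm⟩ := h3 <;>
      rw [show ((n:ℤ))/3 = m from by rw [hm]; exact Int.mul_ediv_cancel_left m (by norm_num)] at hd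
    · rcases hd with hc | hc
      · exact key n hn l k 4 5 m hg' hm (by norm_num) (by norm_num)
          (Or.inl (comb 1 4 hF hc (by ring))) (Or.inl (comb (-1) 5 hF hc (by ring)))
      · exact key n hn l k 4 5 m hg' hm (by norm_num) (by norm_num)
          (Or.inr (comb 1 4 hF hc (by ring))) (Or.inr (comb (-1) 5 hF hc (by ring)))
    · rcases hd with hc | hc
      · exact key n hn l k 5 4 m hg' hm (by norm_num) (by norm_num)
          (Or.inl (comb 1 5 hF hc (by ring))) (Or.inl (comb (-1) 4 hF hc (by ring)))
      · exact key n hn l k 5 4 m hg' hm (by norm_num) (by norm_num)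
          (Or.inr (comb 1 5 hF hc (by ring))) (Or.inr (comb (-1) 4 hF hc (by ring)))
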